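/- Let w ≠ 0, a > 0, b ∈ ℝ and ε ∈ {1, −1}. On the open set U = {(ρ,z) ∈ ℝ² : ρ > 0 and sinh(ε a ln ρ + b) > 0}, define η(ρ) = ρ (|w|/a) sinh(ε a ln ρ + b), σ = ln(η/ρ²), and ω(ρ,z) = w z. Then (σ, ω) satisfies the reduced vacuum Einstein equations Δσ = −e^{−2σ}(ω_ρ² + ω_z²)/ρ⁴ and Δω = 4ω_ρ/ρ + 2(ω_ρσ_ρ + ω_zσ_z) on U. -/

import Mathlib

/-- Partial derivative with respect to the first (ρ) variable. -/
noncomputable def pdr (f : ℝ × ℝ → ℝ) (p : ℝ × ℝ) : ℝ :=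
  deriv (fun x => f (x, p.2)) p.1

/-- Partial derivative with respect to the second (z) variable. -/
noncomputable def pdz (f : ℝ × ℝ → ℝ) (p : ℝ × ℝ) : ℝ :=
  deriv (fun y => f (p.1, y)) p.2

/-- The flat cylindrically symmetric Laplacian Δ = ∂²_ρ + (1/ρ)∂_ρ + ∂²_z. -/
noncomputable def lap (f : ℝ × ℝ → ℝ) (p : ℝ × ℝ) : ℝ :=
  pdr (pdr f) p + pdr f p / p.1 + pdz (pdz f) p

private lemma lewis_alg_aux (a ε ρ s c w : ℝ) (hs : s ≠ 0) (hρ : ρ ≠ 0) (hw : |w| ≠ 0)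
    (hcs : c ^ 2 = 1 + s ^ 2) (he2 : ε * ε = 1) (hw2 : |w| * |w| = w * w) :
    ((s * (ε * a * ρ⁻¹) * (ε * a * ρ⁻¹) + c * (ε * a * -(ρ ^ 2)⁻¹)) * s
        - c * (ε * a * ρ⁻¹) * (c * (ε * a * ρ⁻¹))) / s ^ 2
      - -(ρ ^ 2)⁻¹ + (c * (ε * a * ρ⁻¹) / s - ρ⁻¹) / ρ + 0
    = -(((|w| / a) * s / ρ)⁻¹ * ((|w| / a) * s / ρ)⁻¹) * ((0:ℝ) ^ 2 + w ^ 2) / ρ ^ 4 := by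
  have key : ((s * (ε * a * ρ⁻¹) * (ε * a * ρ⁻¹) + c * (ε * a * -(ρ ^ 2)⁻¹)) * s
        - c * (ε * a * ρ⁻¹) * (c * (ε * a * ρ⁻¹))) / s ^ 2
      - -(ρ ^ 2)⁻¹ + (c * (ε * a * ρ⁻¹) / s - ρ⁻¹) / ρ + 0
      = -(a ^ 2) / (ρ ^ 2 * s ^ 2) := by
    field_simp
    ring_nf
    linear_combination (-(ε ^ 2 * a ^ 2)) * hcs
      + (-(a ^ 2)) * he2
  rw [key]
  by_cases haz : a = 0
  · simp [haz]
  · field_simp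
    linear_combination (-1 : ℝ) * hw2

/-- the Lewis family (III±), with η = ρ(|w|/a)sinh(±a ln ρ + b) and
ω = wz, satisfies the reduced vacuum Einstein equations on the open set where
ρ > 0 and sinh(±a ln ρ + b) > 0. -/
theorem lewis_III_solves_reduced_einstein
    (w a b ε : ℝ) (hw : w ≠ 0) (ha : 0 < a) (hε : ε = 1 ∨ ε = -1)
    (η σ ω : ℝ × ℝ → ℝ)
    (hη : ∀ p : ℝ × ℝ, η p = p.1 * (|w| / a) * Real.sinh (ε * a * Real.log p.1 + b))
    (hσ : ∀ p : ℝ × ℝ, σ p = Real.log (η p / p.1 ^ 2))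
    (hω : ∀ p : ℝ × ℝ, ω p = w * p.2) :
    ∀ p : ℝ × ℝ, 0 < p.1 → 0 < Real.sinh (ε * a * Real.log p.1 + b) →
      lap σ p = - Real.exp (-2 * σ p) * ((pdr ω p) ^ 2 + (pdz ω p) ^ 2) / p.1 ^ 4
      ∧ lap ω p = 4 * pdr ω p / p.1
          + 2 * (pdr ω p * pdr σ p + pdz ω p * pdz σ p) := by
  have he2 : ε * ε = 1 := by rcases hε with h | h <;> rw [h] <;> norm_num
  -- the set S
  set u : ℝ → ℝ := fun x => ε * a * Real.log x + b with hu_def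
  set S : Set ℝ := {x | 0 < x ∧ 0 < Real.sinh (u x)} with hS_def
  have hSopen : IsOpen S := by
    have : S = Set.Ioi (0:ℝ) ∩ (fun x => Real.sinh (u x)) ⁻¹' Set.Ioi 0 := by
      ext x; simp [hS_def, Set.mem_setOf_eq]
    rw [this]
    apply ContinuousOn.isOpen_inter_preimage _ isOpen_Ioi isOpen_Ioi
    exact Real.continuous_sinh.comp_continuousOn
      (((Real.continuousOn_log.mono (by intro x hx; exact ne_of_gt hx)).const_smul
        (ε * a)).add continuousOn_const)
  -- derivative of u
  have hu' : ∀ x : ℝ, 0 < x → HasDerivAt u (ε * a * x⁻¹) x := fun x hx =>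
    ((Real.hasDerivAt_log hx.ne').const_mul (ε * a)).add_const b
  -- first partial of σ, as explicit formula on S
  set D1 : ℝ → ℝ := fun x =>
    Real.cosh (u x) * (ε * a * x⁻¹) / Real.sinh (u x) - x⁻¹ with hD1_def
  -- σ is independent of z:
  have hσfst : ∀ q : ℝ × ℝ, σ q =
      Real.log (q.1 * (|w| / a) * Real.sinh (u q.1) / q.1 ^ 2) := by
    intro q; rw [hσ, hη]
  -- on S, σ(x,y) = log(|w|/a) + log(sinh(u x)) - log x
  have hσS : ∀ x ∈ S, ∀ y : ℝ, σ (x, y) =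
      Real.log (|w| / a) + Real.log (Real.sinh (u x)) - Real.log x := by
    intro x hx y
    obtain ⟨hx0, hs0⟩ := hx
    rw [hσfst]
    have hwa : (0:ℝ) < |w| / a := div_pos (abs_pos.mpr hw) ha
    have : (x, y).1 * (|w| / a) * Real.sinh (u (x, y).1) / (x, y).1 ^ 2
        = (|w| / a) * Real.sinh (u x) / x := by
      simp only; field_simp
    rw [this, Real.log_div (by positivity) hx0.ne',
      Real.log_mul hwa.ne' hs0.ne']
  -- pdr σ = D1 on S × ℝ
  have hpdrσ : ∀ q : ℝ × ℝ, q.1 ∈ S → pdr σ q = D1 q.1 := by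
    intro q hq
    obtain ⟨hx0, hs0⟩ := hq
    have hL : HasDerivAt (fun x => Real.log (|w| / a)
        + Real.log (Real.sinh (u x)) - Real.log x) (D1 q.1) q.1 := by
      have h1 : HasDerivAt (fun x => Real.sinh (u x))
          (Real.cosh (u q.1) * (ε * a * q.1⁻¹)) q.1 := (hu' q.1 hx0).sinh
      have h2 := (h1.log hs0.ne').const_add (Real.log (|w| / a))
      exact h2.sub (Real.hasDerivAt_log hx0.ne')
    have hev : (fun x => σ (x, q.2)) =ᶠ[nhds q.1]
        (fun x => Real.log (|w| / a) + Real.log (Real.sinh (u x)) - Real.log x) := by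
      filter_upwards [hSopen.mem_nhds ⟨hx0, hs0⟩] with x hx
      exact hσS x hx q.2
    rw [pdr, hev.deriv_eq, hL.deriv]
  -- pdz σ = 0 everywhere
  have hpdzσ : ∀ q : ℝ × ℝ, pdz σ q = 0 := by
    intro q
    have : (fun y => σ (q.1, y)) =
        (fun _ => Real.log (q.1 * (|w| / a) * Real.sinh (u q.1) / q.1 ^ 2)) := by
      funext y; exact hσfst (q.1, y)
    rw [pdz, this, deriv_const]
  -- ω partials
  have hpdrω : ∀ q : ℝ × ℝ, pdr ω q = 0 := by
    intro q
    have : (fun x => ω (x, q.2)) = (fun _ => w * q.2) := by funext x; exact hω (x, q.2)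
    rw [pdr, this, deriv_const]
  have hpdzω : ∀ q : ℝ × ℝ, pdz ω q = w := by
    intro q
    have : (fun y => ω (q.1, y)) = (fun y => w * y) := by funext y; exact hω (q.1, y)
    rw [pdz, this]
    simpa using ((hasDerivAt_id q.2).const_mul w).deriv
  intro p hρ hs
  obtain ⟨ρ, z⟩ := p
  simp only at hρ hs ⊢
  have hρmem : ρ ∈ S := ⟨hρ, hs⟩
  set s := Real.sinh (u ρ) with hs_def
  set c := Real.cosh (u ρ) with hc_def
  have hcs : c ^ 2 = 1 + s ^ 2 := by
    have := Real.cosh_sq_sub_sinh_sq (u ρ); nlinarith [this]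
  -- second ρ-derivative of σ
  set D2 : ℝ := ((Real.sinh (u ρ) * (ε * a * ρ⁻¹) * (ε * a * ρ⁻¹)
          + Real.cosh (u ρ) * (ε * a * -(ρ ^ 2)⁻¹)) * Real.sinh (u ρ)
        - Real.cosh (u ρ) * (ε * a * ρ⁻¹) * (Real.cosh (u ρ) * (ε * a * ρ⁻¹)))
        / Real.sinh (u ρ) ^ 2 - -(ρ ^ 2)⁻¹ with hD2_def
  have hD1' : HasDerivAt D1 D2 ρ := by
    rw [hD2_def]
    have hnum : HasDerivAt (fun x => Real.cosh (u x) * (ε * a * x⁻¹))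
        (Real.sinh (u ρ) * (ε * a * ρ⁻¹) * (ε * a * ρ⁻¹)
          + Real.cosh (u ρ) * (ε * a * -(ρ ^ 2)⁻¹)) ρ := by
      have h1 : HasDerivAt (fun x => Real.cosh (u x))
          (Real.sinh (u ρ) * (ε * a * ρ⁻¹)) ρ := (hu' ρ hρ).cosh
      have h2 : HasDerivAt (fun x : ℝ => ε * a * x⁻¹) (ε * a * -(ρ ^ 2)⁻¹) ρ :=
        (hasDerivAt_inv hρ.ne').const_mul (ε * a)
      exact h1.mul h2
    have hden : HasDerivAt (fun x => Real.sinh (u x))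
        (Real.cosh (u ρ) * (ε * a * ρ⁻¹)) ρ := (hu' ρ hρ).sinh
    exact (hnum.div hden hs.ne').sub (hasDerivAt_inv hρ.ne')
  have hpdrpdr : pdr (pdr σ) (ρ, z) = D2 := by
    have hev : (fun x => pdr σ (x, z)) =ᶠ[nhds ρ] D1 := by
      filter_upwards [hSopen.mem_nhds hρmem] with x hx
      exact hpdrσ (x, z) hx
    rw [pdr, hev.deriv_eq, hD1'.deriv]
  -- lap ω and RHS of second equation
  have hlapω : lap ω (ρ, z) = 0 := by
    have h1 : pdr (pdr ω) (ρ, z) = 0 := by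
      have : (fun x => pdr ω (x, z)) = (fun _ => (0:ℝ)) := by
        funext x; exact hpdrω (x, z)
      rw [pdr, this, deriv_const]
    have h2 : pdz (pdz ω) (ρ, z) = 0 := by
      have : (fun y => pdz ω (ρ, y)) = (fun _ => w) := by
        funext y; exact hpdzω (ρ, y)
      rw [pdz, this, deriv_const]
    rw [lap, h1, h2, hpdrω (ρ, z)]
    simp
  constructor
  · -- first equation
    have hzz : pdz (pdz σ) (ρ, z) = 0 := by
      have : (fun y => pdz σ (ρ, y)) = (fun _ => (0:ℝ)) := by
        funext y; exact hpdzσ (ρ, y)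
      rw [pdz, this, deriv_const]
    have hexp : Real.exp (-2 * σ (ρ, z)) = ((|w| / a) * s / ρ)⁻¹ * ((|w| / a) * s / ρ)⁻¹ := by
      have hT : (0:ℝ) < (|w| / a) * s / ρ := by
        have hwa : (0:ℝ) < |w| / a := div_pos (abs_pos.mpr hw) ha
        positivity
      have hσval : σ (ρ, z) = Real.log ((|w| / a) * s / ρ) := by
        rw [hσfst]
        congr 1
        simp only
        field_simp; ring
      rw [hσval]
      rw [show (-2 : ℝ) * Real.log ((|w| / a) * s / ρ)
          = -(Real.log ((|w| / a) * s / ρ) + Real.log ((|w| / a) * s / ρ)) by ring,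
        Real.exp_neg, Real.exp_add, Real.exp_log hT, mul_inv]
    rw [lap, hpdrpdr, hpdrσ (ρ, z) hρmem, hzz, hexp, hpdrω (ρ, z), hpdzω (ρ, z), hD2_def]
    simp only [hD1_def]
    have hsne : s ≠ 0 := hs.ne'
    have hρne : ρ ≠ 0 := hρ.ne'
    have hane : a ≠ 0 := ha.ne'
    have hwne : |w| ≠ 0 := abs_ne_zero.mpr hw
    have hw2 : |w| * |w| = w * w := abs_mul_abs_self w
    rw [← hs_def, ← hc_def]
    exact lewis_alg_aux a ε ρ s c w hsne hρne hwne hcs he2 hw2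
  · rw [hlapω, hpdrω (ρ, z), hpdzσ (ρ, z), hpdrσ (ρ, z) hρmem]
    simp
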